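/- Monotonicity in the dominance order: let λ, μ ⊢ n be partitions with λ ⊵ μ. Then eig(T_λ^→) ≥ eig(T_μ^→) and eig(T_λ^↓) ≥ eig(T_μ^↓). -/

import Mathlib

open scoped BigOperators

/-- The eigenvalue statistic of a tableau-filling `T` of the Young diagram `μ`:
`eig(T) = (1/n) ∑_{(i,j)∈μ} (j-i+1)/T(i,j)` (cells are 0-indexed, which leaves
the quantity `j-i+1` unchanged). -/
noncomputable def eig (μ : YoungDiagram) (T : ℕ × ℕ → ℕ) : ℝ :=
  (μ.card : ℝ)⁻¹ * ∑ c ∈ μ.cells, (((c.2 : ℝ) - (c.1 : ℝ) + 1) / (T c : ℝ))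

/-- `T` is a Young tableau of shape `μ`: a bijection from the cells of `μ` onto `{1,…,n}`. -/
def IsYT (μ : YoungDiagram) (T : ℕ × ℕ → ℕ) : Prop :=
  Set.BijOn T (μ.cells : Set (ℕ × ℕ)) (Finset.Icc 1 μ.card : Set ℕ)

/-- `T` is a standard Young tableau of shape `μ`: a Young tableau whose entries increase
along rows and down columns. -/
def IsSYT (μ : YoungDiagram) (T : ℕ × ℕ → ℕ) : Prop :=
  IsYT μ T ∧
    (∀ i j₁ j₂ : ℕ, (i, j₁) ∈ μ → (i, j₂) ∈ μ → j₁ < j₂ → T (i, j₁) < T (i, j₂)) ∧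
    (∀ i₁ i₂ j : ℕ, (i₁, j) ∈ μ → (i₂, j) ∈ μ → i₁ < i₂ → T (i₁, j) < T (i₂, j))

/-- The row-reading tableau `T_λ^→`: entries `1,…,n` inserted along rows, left to right,
top row first.  The value at a cell is its (1-indexed) rank in row-major order. -/
def rowTab (μ : YoungDiagram) : ℕ × ℕ → ℕ := fun c =>
  (μ.cells.filter (fun c' => c'.1 < c.1 ∨ (c'.1 = c.1 ∧ c'.2 ≤ c.2))).card

/-- The column-reading tableau `T_λ^↓`: entries `1,…,n` inserted down columns, top to bottom,
leftmost column first. -/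
def colTab (μ : YoungDiagram) : ℕ × ℕ → ℕ := fun c =>
  (μ.cells.filter (fun c' => c'.2 < c.2 ∨ (c'.2 = c.2 ∧ c'.1 ≤ c.1))).card

/-- `μ` dominates `ν` (as partitions, read off through row lengths):
`∑_{i=1}^j ν_i ≤ ∑_{i=1}^j μ_i` for every `j`. -/
def Dominates (μ ν : YoungDiagram) : Prop :=
  ∀ j : ℕ, ∑ i ∈ Finset.range j, ν.rowLen i ≤ ∑ i ∈ Finset.range j, μ.rowLen i

namespace EigAux

open Finset

/-- Row length read off a partial-sum sequence. -/
def ell (B : ℕ → ℕ) (i : ℕ) : ℕ := B (i + 1) - B i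

/-- `∑ᵢ (ℓᵢ - s)⁺`. -/
def gs (n s : ℕ) (B : ℕ → ℕ) : ℕ := ∑ i ∈ range n, (ell B i - s)

lemma sum_ell (B : ℕ → ℕ) (hmono : Monotone B) (h0 : B 0 = 0) (k : ℕ) :
    ∑ i ∈ range k, ell B i = B k := by
  induction k with
  | zero => simp [h0]
  | succ k ih =>
    rw [sum_range_succ, ih, ell]
    have h1 : B k ≤ B (k + 1) := hmono (by omega)
    omega

lemma ell_anti (B : ℕ → ℕ) (hconc : ∀ i, B (i + 2) + B i ≤ 2 * B (i + 1)) :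
    ∀ i j, i ≤ j → ell B j ≤ ell B i := by
  have step : ∀ i, ell B (i + 1) ≤ ell B i := by
    intro i
    have h := hconc i
    unfold ell
    rw [show i + 1 + 1 = i + 2 by omega]
    omega
  intro i j hij
  induction j, hij using Nat.le_induction with
  | base => exact le_refl _
  | succ j hij ih => exact le_trans (step j) ih

lemma le_gs (B : ℕ → ℕ) (hmono : Monotone B) (h0 : B 0 = 0) {k n : ℕ} (hk : k ≤ n) (s : ℕ) :
    B k - s * k ≤ gs n s B := by
  have h1 : B k ≤ ∑ i ∈ range k, ((ell B i - s) + s) := by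
    rw [← sum_ell B hmono h0 k]
    exact sum_le_sum fun i _ => by omega
  rw [sum_add_distrib, sum_const, card_range, smul_eq_mul, mul_comm k s] at h1
  have h2 : ∑ i ∈ range k, (ell B i - s) ≤ gs n s B :=
    sum_le_sum_of_subset (range_subset_range.2 hk)
  omega

lemma sum_tsub_of_le (g : ℕ → ℕ) (s k : ℕ) (h : ∀ i < k, s ≤ g i) :
    ∑ i ∈ range k, (g i - s) + s * k = ∑ i ∈ range k, g i := by
  induction k with
  | zero => simp
  | succ k ih =>
    have hk := h k (by omega)
    have hih := ih (fun i hi => h i (by omega))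
    have hm : s * (k + 1) = s * k + s := by ring
    rw [sum_range_succ, sum_range_succ, hm]
    omega

lemma gs_eq_exists (B : ℕ → ℕ) (hmono : Monotone B) (h0 : B 0 = 0)
    (hconc : ∀ i, B (i + 2) + B i ≤ 2 * B (i + 1)) (n s : ℕ) :
    ∃ k ≤ n, gs n s B = B k - s * k := by
  have hex : ∃ k, k = n ∨ ell B k ≤ s := ⟨n, Or.inl rfl⟩
  set k := Nat.find hex with hkdef
  have hkle : k ≤ n := Nat.find_le (Or.inl rfl)
  have hbig : ∀ i < k, s < ell B i := by
    intro i hi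
    have := Nat.find_min hex hi
    push_neg at this
    omega
  have hsmall : ∀ i, k ≤ i → i < n → ell B i ≤ s := by
    intro i hki hin
    have hspec := Nat.find_spec hex
    rcases hspec with h | h
    · omega
    · exact le_trans (ell_anti B hconc k i hki) h
  refine ⟨k, hkle, ?_⟩
  have hsplit : gs n s B = ∑ i ∈ range k, (ell B i - s) := by
    unfold gs
    rw [range_eq_Ico, ← sum_Ico_consecutive _ (Nat.zero_le k) hkle]
    have hz : ∑ i ∈ Ico k n, (ell B i - s) = 0 := by
      apply sum_eq_zero
      intro i hi
      rw [mem_Ico] at hi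
      have := hsmall i hi.1 hi.2
      omega
    rw [hz, ← range_eq_Ico]
    omega
  rw [hsplit]
  have := sum_tsub_of_le (ell B) s k (fun i hi => le_of_lt (hbig i hi))
  rw [sum_ell B hmono h0 k] at this
  omega

lemma gs_mono (B B' : ℕ → ℕ) (hmono : Monotone B) (h0 : B 0 = 0)
    (hconc : ∀ i, B (i + 2) + B i ≤ 2 * B (i + 1))
    (hmono' : Monotone B') (h0' : B' 0 = 0)
    (hle : ∀ i, B i ≤ B' i) (n s : ℕ) : gs n s B ≤ gs n s B' := by
  obtain ⟨k, hk, heq⟩ := gs_eq_exists B hmono h0 hconc n s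
  rw [heq]
  have h1 : B k - s * k ≤ B' k - s * k := by
    have := hle k; omega
  exact le_trans h1 (le_gs B' hmono' h0' hk s)

lemma abel (B : ℕ → ℕ) (hmono : Monotone B) (n : ℕ) :
    ∑ i ∈ range n, (i : ℝ) * (ell B i : ℝ)
      = n * B n - ∑ i ∈ range n, (B (i + 1) : ℝ) := by
  induction n with
  | zero => simp
  | succ n ih =>
    rw [sum_range_succ, sum_range_succ, ih]
    have hc : (ell B n : ℝ) = (B (n + 1) : ℝ) - B n := by
      unfold ell
      have := hmono (Nat.le_succ n)
      push_cast [this]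
      ring
    rw [hc]
    push_cast
    ring

lemma sum_succ_eq (n : ℕ) : ∀ ℓ : ℕ, ℓ ≤ n →
    ∑ j ∈ range ℓ, (j + 1) = ∑ s ∈ range n, (ℓ - s) := by
  intro ℓ
  induction ℓ with
  | zero => simp
  | succ ℓ ih =>
    intro h
    have key : ∀ s, (ℓ + 1) - s = (ℓ - s) + (if s < ℓ + 1 then 1 else 0) := by
      intro s; split <;> omega
    have hfil : ∑ s ∈ range n, (if s < ℓ + 1 then 1 else 0) = ℓ + 1 := by
      rw [← sum_filter]
      have heq : (range n).filter (fun s => s < ℓ + 1) = range (ℓ + 1) := by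
        ext x; simp; omega
      rw [heq]
      simp
    have hr : ∑ s ∈ range n, ((ℓ + 1) - s) = (∑ s ∈ range n, (ℓ - s)) + (ℓ + 1) := by
      rw [sum_congr rfl fun s _ => key s, sum_add_distrib, hfil]
    rw [hr, sum_range_succ, ih (by omega)]

/-- Content sum of a truncated diagram given by partial sums `B`, read by rows. -/
noncomputable def CvalR (n : ℕ) (B : ℕ → ℕ) : ℝ :=
  ∑ i ∈ range n, ∑ j ∈ range (ell B i), ((j : ℝ) - i + 1)

/-- Content sum of a truncated diagram given by column partial sums `B`, read by columns. -/
noncomputable def CvalC (n : ℕ) (B : ℕ → ℕ) : ℝ :=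
  ∑ j ∈ range n, ∑ i ∈ range (ell B j), ((j : ℝ) - i + 1)

lemma inner_row (n i ℓ : ℕ) (h : ℓ ≤ n) :
    ∑ j ∈ range ℓ, ((j : ℝ) - i + 1)
      = (∑ s ∈ range n, ((ℓ - s : ℕ) : ℝ)) - i * ℓ := by
  calc ∑ j ∈ range ℓ, ((j : ℝ) - i + 1)
      = ∑ j ∈ range ℓ, (((j + 1 : ℕ) : ℝ) - i) := by
        apply sum_congr rfl; intro j _; push_cast; ring
    _ = (∑ j ∈ range ℓ, ((j + 1 : ℕ) : ℝ)) - ∑ j ∈ range ℓ, (i : ℝ) := sum_sub_distrib _ _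
    _ = (∑ s ∈ range n, ((ℓ - s : ℕ) : ℝ)) - i * ℓ := by
        rw [sum_const, card_range, nsmul_eq_mul, ← Nat.cast_sum, ← Nat.cast_sum,
          sum_succ_eq n ℓ h, mul_comm]

lemma inner_col (n j ℓ : ℕ) (h : ℓ ≤ n) :
    ∑ i ∈ range ℓ, ((j : ℝ) - i + 1)
      = (j : ℝ) * ℓ + 2 * ℓ - (∑ s ∈ range n, ((ℓ - s : ℕ) : ℝ)) := by
  calc ∑ i ∈ range ℓ, ((j : ℝ) - i + 1)
      = ∑ i ∈ range ℓ, (((j : ℝ) + 2) - ((i + 1 : ℕ) : ℝ)) := by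
        apply sum_congr rfl; intro i _; push_cast; ring
    _ = (∑ i ∈ range ℓ, ((j : ℝ) + 2)) - ∑ i ∈ range ℓ, ((i + 1 : ℕ) : ℝ) := sum_sub_distrib _ _
    _ = (j : ℝ) * ℓ + 2 * ℓ - (∑ s ∈ range n, ((ℓ - s : ℕ) : ℝ)) := by
        rw [sum_const, card_range, nsmul_eq_mul, ← Nat.cast_sum, ← Nat.cast_sum,
          sum_succ_eq n ℓ h]
        ring

lemma ell_le (B : ℕ → ℕ) (hmono : Monotone B) {n : ℕ} (hn : B n ≤ n) {i : ℕ}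
    (hi : i < n) : ell B i ≤ n := by
  have h1 : B (i + 1) ≤ B n := hmono (by omega)
  unfold ell
  omega

lemma hgs_swap (n : ℕ) (B : ℕ → ℕ) :
    ∑ s ∈ range n, (gs n s B : ℝ) = ∑ i ∈ range n, ∑ s ∈ range n, ((ell B i - s : ℕ) : ℝ) := by
  rw [sum_comm]
  apply sum_congr rfl
  intro s _
  rw [gs, Nat.cast_sum]

lemma CvalR_eq (n : ℕ) (B : ℕ → ℕ) (hmono : Monotone B) (h0 : B 0 = 0) (hn : B n ≤ n) :
    CvalR n B = (∑ s ∈ range n, (gs n s B : ℝ))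
      - ((n : ℝ) * B n - ∑ i ∈ range n, (B (i + 1) : ℝ)) := by
  unfold CvalR
  have h1 : ∀ i ∈ range n, ∑ j ∈ range (ell B i), ((j : ℝ) - i + 1)
      = (∑ s ∈ range n, ((ell B i - s : ℕ) : ℝ)) - (i : ℝ) * (ell B i : ℝ) := by
    intro i hi
    exact inner_row n i (ell B i) (ell_le B hmono hn (mem_range.1 hi))
  rw [sum_congr rfl h1, sum_sub_distrib, abel B hmono n, hgs_swap]

lemma CvalC_eq (n : ℕ) (B : ℕ → ℕ) (hmono : Monotone B) (h0 : B 0 = 0) (hn : B n ≤ n) :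
    CvalC n B = ((n : ℝ) * B n - ∑ i ∈ range n, (B (i + 1) : ℝ)) + 2 * B n
      - (∑ s ∈ range n, (gs n s B : ℝ)) := by
  unfold CvalC
  have h1 : ∀ j ∈ range n, ∑ i ∈ range (ell B j), ((j : ℝ) - i + 1)
      = ((j : ℝ) * (ell B j : ℝ) + 2 * (ell B j : ℝ))
        - (∑ s ∈ range n, ((ell B j - s : ℕ) : ℝ)) := by
    intro j hj
    rw [inner_col n j (ell B j) (ell_le B hmono hn (mem_range.1 hj))]
  rw [sum_congr rfl h1, sum_sub_distrib, sum_add_distrib, abel B hmono n, hgs_swap]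
  have h2 : ∑ j ∈ range n, 2 * (ell B j : ℝ) = 2 * (B n : ℝ) := by
    rw [← mul_sum, ← Nat.cast_sum, sum_ell B hmono h0]
  rw [h2]

lemma masterRow (n : ℕ) (B B' : ℕ → ℕ)
    (hmono : Monotone B) (h0 : B 0 = 0) (hconc : ∀ i, B (i + 2) + B i ≤ 2 * B (i + 1))
    (hmono' : Monotone B') (h0' : B' 0 = 0)
    (hle : ∀ i, B i ≤ B' i) (hend : B n = B' n) (hn : B' n ≤ n) :
    CvalR n B ≤ CvalR n B' := by
  have hBn : B n ≤ n := by have := hle n; omega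
  rw [CvalR_eq n B hmono h0 hBn, CvalR_eq n B' hmono' h0' hn]
  have g1 : ∑ s ∈ range n, (gs n s B : ℝ) ≤ ∑ s ∈ range n, (gs n s B' : ℝ) :=
    sum_le_sum fun s _ => Nat.cast_le.2 (gs_mono B B' hmono h0 hconc hmono' h0' hle n s)
  have g2 : ∑ i ∈ range n, (B (i + 1) : ℝ) ≤ ∑ i ∈ range n, (B' (i + 1) : ℝ) :=
    sum_le_sum fun i _ => Nat.cast_le.2 (hle (i + 1))
  rw [hend]
  linarith

lemma masterCol (n : ℕ) (B B' : ℕ → ℕ)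
    (hmono : Monotone B) (h0 : B 0 = 0) (hconc : ∀ i, B (i + 2) + B i ≤ 2 * B (i + 1))
    (hmono' : Monotone B') (h0' : B' 0 = 0)
    (hle : ∀ i, B i ≤ B' i) (hend : B n = B' n) (hn : B' n ≤ n) :
    CvalC n B' ≤ CvalC n B := by
  have hBn : B n ≤ n := by have := hle n; omega
  rw [CvalC_eq n B hmono h0 hBn, CvalC_eq n B' hmono' h0' hn]
  have g1 : ∑ s ∈ range n, (gs n s B : ℝ) ≤ ∑ s ∈ range n, (gs n s B' : ℝ) :=
    sum_le_sum fun s _ => Nat.cast_le.2 (gs_mono B B' hmono h0 hconc hmono' h0' hle n s)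
  have g2 : ∑ i ∈ range n, (B (i + 1) : ℝ) ≤ ∑ i ∈ range n, (B' (i + 1) : ℝ) :=
    sum_le_sum fun i _ => Nat.cast_le.2 (hle (i + 1))
  rw [hend]
  linarith

/-- Partial sums of row lengths. -/
def PS (κ : YoungDiagram) (i : ℕ) : ℕ := ∑ r ∈ Finset.range i, κ.rowLen r

/-- Partial sums of column lengths. -/
def PSc (κ : YoungDiagram) (j : ℕ) : ℕ := ∑ c ∈ Finset.range j, κ.colLen c

lemma PS_zero (κ : YoungDiagram) : PS κ 0 = 0 := by simp [PS]

lemma PSc_zero (κ : YoungDiagram) : PSc κ 0 = 0 := by simp [PSc]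

lemma PS_succ (κ : YoungDiagram) (i : ℕ) : PS κ (i + 1) = PS κ i + κ.rowLen i := by
  rw [PS, PS, sum_range_succ]

lemma PSc_succ (κ : YoungDiagram) (j : ℕ) : PSc κ (j + 1) = PSc κ j + κ.colLen j := by
  rw [PSc, PSc, sum_range_succ]

lemma PS_mono (κ : YoungDiagram) : Monotone (PS κ) := fun _ _ h =>
  sum_le_sum_of_subset (range_subset_range.2 h)

lemma PSc_mono (κ : YoungDiagram) : Monotone (PSc κ) := fun _ _ h =>
  sum_le_sum_of_subset (range_subset_range.2 h)

lemma PS_concave (κ : YoungDiagram) (i : ℕ) :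
    PS κ (i + 2) + PS κ i ≤ 2 * PS κ (i + 1) := by
  have h1 := PS_succ κ (i + 1)
  have h2 := PS_succ κ i
  have h3 := κ.rowLen_anti i (i + 1) (by omega)
  rw [show i + 1 + 1 = i + 2 by omega] at h1
  omega

lemma PSc_concave (κ : YoungDiagram) (j : ℕ) :
    PSc κ (j + 2) + PSc κ j ≤ 2 * PSc κ (j + 1) := by
  have h1 := PSc_succ κ (j + 1)
  have h2 := PSc_succ κ j
  have h3 := κ.colLen_anti j (j + 1) (by omega)
  rw [show j + 1 + 1 = j + 2 by omega] at h1
  omega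

lemma card_filter_fst_lt (κ : YoungDiagram) (i : ℕ) :
    (κ.cells.filter (fun c => c.1 < i)).card = PS κ i := by
  induction i with
  | zero => simp [PS]
  | succ i ih =>
    have hsplit : κ.cells.filter (fun c => c.1 < i + 1)
        = κ.cells.filter (fun c => c.1 < i ∨ c.1 = i) := by
      apply filter_congr
      intro c _
      omega
    have hdisj : Disjoint (κ.cells.filter (fun c => c.1 < i))
        (κ.cells.filter (fun c => c.1 = i)) := by
      rw [disjoint_left]
      intro a ha hb
      simp only [mem_filter] at ha hb
      omega
    rw [hsplit, filter_or, card_union_of_disjoint hdisj, ih]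
    have hrow : κ.cells.filter (fun c => c.1 = i) = κ.row i := rfl
    rw [hrow, ← YoungDiagram.rowLen_eq_card, PS_succ]

lemma card_filter_snd_lt (κ : YoungDiagram) (j : ℕ) :
    (κ.cells.filter (fun c => c.2 < j)).card = PSc κ j := by
  induction j with
  | zero => simp [PSc]
  | succ j ih =>
    have hsplit : κ.cells.filter (fun c => c.2 < j + 1)
        = κ.cells.filter (fun c => c.2 < j ∨ c.2 = j) := by
      apply filter_congr
      intro c _
      omega
    have hdisj : Disjoint (κ.cells.filter (fun c => c.2 < j))
        (κ.cells.filter (fun c => c.2 = j)) := by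
      rw [disjoint_left]
      intro a ha hb
      simp only [mem_filter] at ha hb
      omega
    rw [hsplit, filter_or, card_union_of_disjoint hdisj, ih]
    have hcol : κ.cells.filter (fun c => c.2 = j) = κ.col j := rfl
    rw [hcol, ← YoungDiagram.colLen_eq_card, PSc_succ]

lemma rowTab_mem (κ : YoungDiagram) {i j : ℕ} (h : (i, j) ∈ κ) :
    rowTab κ (i, j) = PS κ i + j + 1 := by
  unfold rowTab
  have hdisj : Disjoint (κ.cells.filter (fun c => c.1 < i))
      (κ.cells.filter (fun c => c.1 = i ∧ c.2 ≤ j)) := by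
    rw [disjoint_left]
    intro a ha hb
    simp only [mem_filter] at ha hb
    omega
  rw [filter_or, card_union_of_disjoint hdisj, card_filter_fst_lt]
  have hset : κ.cells.filter (fun c => c.1 = i ∧ c.2 ≤ j) = {i} ×ˢ range (j + 1) := by
    ext ⟨a, b⟩
    simp only [mem_filter, YoungDiagram.mem_cells, mem_product, mem_singleton, mem_range]
    constructor
    · rintro ⟨-, rfl, hb⟩
      exact ⟨rfl, by omega⟩
    · rintro ⟨rfl, hb⟩
      exact ⟨κ.up_left_mem (le_refl a) (by omega) h, rfl, by omega⟩
  rw [hset, card_product, card_singleton, card_range]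
  omega

lemma colTab_mem (κ : YoungDiagram) {i j : ℕ} (h : (i, j) ∈ κ) :
    colTab κ (i, j) = PSc κ j + i + 1 := by
  unfold colTab
  have hdisj : Disjoint (κ.cells.filter (fun c => c.2 < j))
      (κ.cells.filter (fun c => c.2 = j ∧ c.1 ≤ i)) := by
    rw [disjoint_left]
    intro a ha hb
    simp only [mem_filter] at ha hb
    omega
  rw [filter_or, card_union_of_disjoint hdisj, card_filter_snd_lt]
  have hset : κ.cells.filter (fun c => c.2 = j ∧ c.1 ≤ i) = range (i + 1) ×ˢ {j} := by
    ext ⟨a, b⟩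
    simp only [mem_filter, YoungDiagram.mem_cells, mem_product, mem_singleton, mem_range]
    constructor
    · rintro ⟨-, rfl, ha⟩
      exact ⟨by omega, rfl⟩
    · rintro ⟨ha, rfl⟩
      exact ⟨κ.up_left_mem (by omega) (le_refl b) h, rfl, by omega⟩
  rw [hset, card_product, card_singleton, card_range]
  omega

lemma colLen0_le_card (κ : YoungDiagram) : κ.colLen 0 ≤ κ.card := by
  rw [YoungDiagram.colLen_eq_card]
  exact card_le_card (filter_subset _ _)

lemma rowLen0_le_card (κ : YoungDiagram) : κ.rowLen 0 ≤ κ.card := by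
  rw [YoungDiagram.rowLen_eq_card]
  exact card_le_card (filter_subset _ _)

lemma PS_le_card (κ : YoungDiagram) (i : ℕ) : PS κ i ≤ κ.card := by
  rw [← card_filter_fst_lt]
  exact card_le_card (filter_subset _ _)

lemma PSc_le_card (κ : YoungDiagram) (j : ℕ) : PSc κ j ≤ κ.card := by
  rw [← card_filter_snd_lt]
  exact card_le_card (filter_subset _ _)

lemma PS_eq_card (κ : YoungDiagram) {R : ℕ} (hR : κ.colLen 0 ≤ R) : PS κ R = κ.card := by
  rw [← card_filter_fst_lt]
  congr 1
  apply filter_true_of_mem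
  rintro ⟨a, b⟩ hc
  have h1 : a < κ.colLen b := YoungDiagram.mem_iff_lt_colLen.mp (YoungDiagram.mem_cells _ |>.mp hc)
  have h2 := κ.colLen_anti 0 b (Nat.zero_le b)
  omega

lemma PSc_eq_card (κ : YoungDiagram) {R : ℕ} (hR : κ.rowLen 0 ≤ R) : PSc κ R = κ.card := by
  rw [← card_filter_snd_lt]
  congr 1
  apply filter_true_of_mem
  rintro ⟨a, b⟩ hc
  have h1 : b < κ.rowLen a := YoungDiagram.mem_iff_lt_rowLen.mp (YoungDiagram.mem_cells _ |>.mp hc)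
  have h2 := κ.rowLen_anti 0 a (Nat.zero_le a)
  omega

lemma sum_cells_row {M : Type*} [AddCommMonoid M] (κ : YoungDiagram) {R : ℕ}
    (hR : κ.colLen 0 ≤ R) (f : ℕ × ℕ → M) :
    ∑ c ∈ κ.cells, f c = ∑ i ∈ range R, ∑ j ∈ range (κ.rowLen i), f (i, j) := by
  rw [← sum_fiberwise_of_maps_to (g := Prod.fst) (t := range R) ?hmap f]
  case hmap =>
    rintro ⟨a, b⟩ hc
    have h1 : a < κ.colLen b := YoungDiagram.mem_iff_lt_colLen.mp (YoungDiagram.mem_cells _ |>.mp hc)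
    have h2 := κ.colLen_anti 0 b (Nat.zero_le b)
    exact mem_range.2 (by omega)
  apply sum_congr rfl
  intro i _
  rw [show κ.cells.filter (fun c => c.1 = i) = κ.row i from rfl, YoungDiagram.row_eq_prod,
    sum_product, sum_singleton]

lemma sum_cells_col {M : Type*} [AddCommMonoid M] (κ : YoungDiagram) {R : ℕ}
    (hR : κ.rowLen 0 ≤ R) (f : ℕ × ℕ → M) :
    ∑ c ∈ κ.cells, f c = ∑ j ∈ range R, ∑ i ∈ range (κ.colLen j), f (i, j) := by
  rw [← sum_fiberwise_of_maps_to (g := Prod.snd) (t := range R) ?hmap f]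
  case hmap =>
    rintro ⟨a, b⟩ hc
    have h1 : b < κ.rowLen a := YoungDiagram.mem_iff_lt_rowLen.mp (YoungDiagram.mem_cells _ |>.mp hc)
    have h2 := κ.rowLen_anti 0 a (Nat.zero_le a)
    exact mem_range.2 (by omega)
  apply sum_congr rfl
  intro j _
  rw [show κ.cells.filter (fun c => c.2 = j) = κ.col j from rfl, YoungDiagram.col_eq_prod,
    sum_product_right, sum_singleton]

lemma ell_PS (κ : YoungDiagram) (i : ℕ) : ell (PS κ) i = κ.rowLen i := by
  unfold ell
  rw [PS_succ]
  omega

lemma ell_PSc (κ : YoungDiagram) (j : ℕ) : ell (PSc κ) j = κ.colLen j := by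
  unfold ell
  rw [PSc_succ]
  omega

lemma PSc_add_gs (κ : YoungDiagram) (n : ℕ) (hn : κ.card = n) (j : ℕ) :
    PSc κ j + gs n j (PS κ) = n := by
  have hcol : κ.colLen 0 ≤ n := hn ▸ colLen0_le_card κ
  have h1 : PSc κ j = ∑ i ∈ range n, min (κ.rowLen i) j := by
    rw [← card_filter_snd_lt, card_filter,
      sum_cells_row κ hcol (fun c => if c.2 < j then 1 else 0)]
    apply sum_congr rfl
    intro i _
    rw [← sum_filter]
    have hset : (range (κ.rowLen i)).filter (fun j' => j' < j)
        = range (min (κ.rowLen i) j) := by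
      ext x; simp only [mem_filter, mem_range]; omega
    rw [hset, sum_const, card_range, smul_eq_mul, mul_one]
  have h2 : gs n j (PS κ) = ∑ i ∈ range n, (κ.rowLen i - j) := by
    unfold gs
    exact sum_congr rfl fun i _ => by rw [ell_PS]
  have h3 : ∑ i ∈ range n, (min (κ.rowLen i) j + (κ.rowLen i - j))
      = ∑ i ∈ range n, κ.rowLen i := sum_congr rfl fun i _ => by omega
  have h4 : PS κ n = n := by rw [PS_eq_card κ hcol, hn]
  have h5 : ∑ i ∈ range n, κ.rowLen i = n := h4
  rw [h1, h2, ← sum_add_distrib, h3, h5]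

lemma Ct_row (κ : YoungDiagram) (n t : ℕ) (hn : κ.card = n) :
    ∑ c ∈ κ.cells, (if rowTab κ c ≤ t then ((c.2 : ℝ) - c.1 + 1) else 0)
      = CvalR n (fun i => min (PS κ i) t) := by
  have hcol : κ.colLen 0 ≤ n := hn ▸ colLen0_le_card κ
  have hstep : ∀ c ∈ κ.cells, (if rowTab κ c ≤ t then ((c.2 : ℝ) - c.1 + 1) else 0)
      = (if PS κ c.1 + c.2 + 1 ≤ t then ((c.2 : ℝ) - c.1 + 1) else 0) := by
    rintro ⟨a, b⟩ hc
    rw [rowTab_mem κ (YoungDiagram.mem_cells _ |>.mp hc)]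
  rw [sum_congr rfl hstep,
    sum_cells_row κ hcol (fun c => if PS κ c.1 + c.2 + 1 ≤ t then ((c.2 : ℝ) - c.1 + 1) else 0)]
  unfold CvalR
  apply sum_congr rfl
  intro i _
  rw [← sum_filter]
  have hPSi := PS_succ κ i
  have hset : (range (κ.rowLen i)).filter (fun j => PS κ i + j + 1 ≤ t)
      = range (ell (fun i => min (PS κ i) t) i) := by
    ext x
    simp only [mem_filter, mem_range, ell]
    omega
  rw [hset]

lemma Ct_col (κ : YoungDiagram) (n t : ℕ) (hn : κ.card = n) :
    ∑ c ∈ κ.cells, (if colTab κ c ≤ t then ((c.2 : ℝ) - c.1 + 1) else 0)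
      = CvalC n (fun j => min (PSc κ j) t) := by
  have hrow : κ.rowLen 0 ≤ n := hn ▸ rowLen0_le_card κ
  have hstep : ∀ c ∈ κ.cells, (if colTab κ c ≤ t then ((c.2 : ℝ) - c.1 + 1) else 0)
      = (if PSc κ c.2 + c.1 + 1 ≤ t then ((c.2 : ℝ) - c.1 + 1) else 0) := by
    rintro ⟨a, b⟩ hc
    rw [colTab_mem κ (YoungDiagram.mem_cells _ |>.mp hc)]
  rw [sum_congr rfl hstep,
    sum_cells_col κ hrow (fun c => if PSc κ c.2 + c.1 + 1 ≤ t then ((c.2 : ℝ) - c.1 + 1) else 0)]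
  unfold CvalC
  apply sum_congr rfl
  intro j _
  rw [← sum_filter]
  have hPSj := PSc_succ κ j
  have hset : (range (κ.colLen j)).filter (fun i => PSc κ j + i + 1 ≤ t)
      = range (ell (fun j => min (PSc κ j) t) j) := by
    ext x
    simp only [mem_filter, mem_range, ell]
    omega
  rw [hset]

lemma telescope {m n : ℕ} (h1 : 1 ≤ m) (hmn : m ≤ n) :
    (1 : ℝ) / m = 1 / n + ∑ t ∈ Ico m n, (1 / (t : ℝ) - 1 / ((t : ℝ) + 1)) := by
  induction n, hmn using Nat.le_induction with
  | base => simp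
  | succ n hmn ih =>
    rw [sum_Ico_succ_top hmn, ih]
    have hn0 : (0 : ℝ) < n := by
      have : 1 ≤ n := le_trans h1 hmn
      exact_mod_cast this
    have hcast : ((n + 1 : ℕ) : ℝ) = (n : ℝ) + 1 := by push_cast; ring
    rw [hcast]
    ring


lemma F_row (κ : YoungDiagram) (n : ℕ) (hn : κ.card = n) :
    ∑ c ∈ κ.cells, (((c.2 : ℝ) - (c.1 : ℝ) + 1) / (rowTab κ c : ℝ))
      = (1 / (n : ℝ)) * CvalR n (fun i => min (PS κ i) n)
        + ∑ t ∈ Ico 1 n, (1 / (t : ℝ) - 1 / ((t : ℝ) + 1))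
            * CvalR n (fun i => min (PS κ i) t) := by
  have hT : ∀ c ∈ κ.cells, 1 ≤ rowTab κ c ∧ rowTab κ c ≤ n := by
    rintro ⟨a, b⟩ hc
    have hm := YoungDiagram.mem_cells _ |>.mp hc
    rw [rowTab_mem κ hm]
    have hb : b < κ.rowLen a := YoungDiagram.mem_iff_lt_rowLen.mp hm
    have h1 := PS_succ κ a
    have h2 := PS_le_card κ (a + 1)
    omega
  have key : ∀ c ∈ κ.cells,
      (((c.2 : ℝ) - (c.1 : ℝ) + 1) / (rowTab κ c : ℝ))
        = ((c.2 : ℝ) - c.1 + 1) * (1 / (n : ℝ))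
          + ∑ t ∈ Ico 1 n, (if rowTab κ c ≤ t
              then ((c.2 : ℝ) - c.1 + 1) * (1 / (t : ℝ) - 1 / ((t : ℝ) + 1)) else 0) := by
    intro c hc
    obtain ⟨h1, h2⟩ := hT c hc
    have htel := telescope h1 h2
    have hsub : ∑ t ∈ Ico (rowTab κ c) n, (1 / (t : ℝ) - 1 / ((t : ℝ) + 1))
        = ∑ t ∈ Ico 1 n, (if rowTab κ c ≤ t
            then (1 / (t : ℝ) - 1 / ((t : ℝ) + 1)) else 0) := by
      rw [← sum_filter]
      congr 1
      ext x
      simp only [mem_filter, mem_Ico]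
      omega
    calc ((c.2 : ℝ) - (c.1 : ℝ) + 1) / (rowTab κ c : ℝ)
        = ((c.2 : ℝ) - c.1 + 1) * (1 / (rowTab κ c : ℝ)) := by ring
      _ = ((c.2 : ℝ) - c.1 + 1) * (1 / (n : ℝ)
            + ∑ t ∈ Ico (rowTab κ c) n, (1 / (t : ℝ) - 1 / ((t : ℝ) + 1))) := by rw [← htel]
      _ = ((c.2 : ℝ) - c.1 + 1) * (1 / (n : ℝ))
            + ∑ t ∈ Ico 1 n, ((c.2 : ℝ) - c.1 + 1) * (if rowTab κ c ≤ t
                then (1 / (t : ℝ) - 1 / ((t : ℝ) + 1)) else 0) := by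
          rw [hsub, mul_add, mul_sum]
      _ = _ := by
          congr 1
          apply sum_congr rfl
          intro t _
          split_ifs <;> ring
  rw [sum_congr rfl key, sum_add_distrib]
  congr 1
  · rw [← sum_mul]
    have hCn : ∑ c ∈ κ.cells, ((c.2 : ℝ) - (c.1 : ℝ) + 1)
        = CvalR n (fun i => min (PS κ i) n) := by
      rw [← Ct_row κ n n hn]
      apply sum_congr rfl
      intro c hc
      rw [if_pos (hT c hc).2]
    rw [hCn, mul_comm]
  · rw [sum_comm]
    apply sum_congr rfl
    intro t _
    rw [← Ct_row κ n t hn, mul_sum]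
    apply sum_congr rfl
    intro c _
    split_ifs <;> ring

lemma F_col (κ : YoungDiagram) (n : ℕ) (hn : κ.card = n) :
    ∑ c ∈ κ.cells, (((c.2 : ℝ) - (c.1 : ℝ) + 1) / (colTab κ c : ℝ))
      = (1 / (n : ℝ)) * CvalC n (fun j => min (PSc κ j) n)
        + ∑ t ∈ Ico 1 n, (1 / (t : ℝ) - 1 / ((t : ℝ) + 1))
            * CvalC n (fun j => min (PSc κ j) t) := by
  have hT : ∀ c ∈ κ.cells, 1 ≤ colTab κ c ∧ colTab κ c ≤ n := by
    rintro ⟨a, b⟩ hc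
    have hm := YoungDiagram.mem_cells _ |>.mp hc
    rw [colTab_mem κ hm]
    have hb : a < κ.colLen b := YoungDiagram.mem_iff_lt_colLen.mp hm
    have h1 := PSc_succ κ b
    have h2 := PSc_le_card κ (b + 1)
    omega
  have key : ∀ c ∈ κ.cells,
      (((c.2 : ℝ) - (c.1 : ℝ) + 1) / (colTab κ c : ℝ))
        = ((c.2 : ℝ) - c.1 + 1) * (1 / (n : ℝ))
          + ∑ t ∈ Ico 1 n, (if colTab κ c ≤ t
              then ((c.2 : ℝ) - c.1 + 1) * (1 / (t : ℝ) - 1 / ((t : ℝ) + 1)) else 0) := by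
    intro c hc
    obtain ⟨h1, h2⟩ := hT c hc
    have htel := telescope h1 h2
    have hsub : ∑ t ∈ Ico (colTab κ c) n, (1 / (t : ℝ) - 1 / ((t : ℝ) + 1))
        = ∑ t ∈ Ico 1 n, (if colTab κ c ≤ t
            then (1 / (t : ℝ) - 1 / ((t : ℝ) + 1)) else 0) := by
      rw [← sum_filter]
      congr 1
      ext x
      simp only [mem_filter, mem_Ico]
      omega
    calc ((c.2 : ℝ) - (c.1 : ℝ) + 1) / (colTab κ c : ℝ)
        = ((c.2 : ℝ) - c.1 + 1) * (1 / (colTab κ c : ℝ)) := by ring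
      _ = ((c.2 : ℝ) - c.1 + 1) * (1 / (n : ℝ)
            + ∑ t ∈ Ico (colTab κ c) n, (1 / (t : ℝ) - 1 / ((t : ℝ) + 1))) := by rw [← htel]
      _ = ((c.2 : ℝ) - c.1 + 1) * (1 / (n : ℝ))
            + ∑ t ∈ Ico 1 n, ((c.2 : ℝ) - c.1 + 1) * (if colTab κ c ≤ t
                then (1 / (t : ℝ) - 1 / ((t : ℝ) + 1)) else 0) := by
          rw [hsub, mul_add, mul_sum]
      _ = _ := by
          congr 1
          apply sum_congr rfl
          intro t _
          split_ifs <;> ring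
  rw [sum_congr rfl key, sum_add_distrib]
  congr 1
  · rw [← sum_mul]
    have hCn : ∑ c ∈ κ.cells, ((c.2 : ℝ) - (c.1 : ℝ) + 1)
        = CvalC n (fun j => min (PSc κ j) n) := by
      rw [← Ct_col κ n n hn]
      apply sum_congr rfl
      intro c hc
      rw [if_pos (hT c hc).2]
    rw [hCn, mul_comm]
  · rw [sum_comm]
    apply sum_congr rfl
    intro t _
    rw [← Ct_col κ n t hn, mul_sum]
    apply sum_congr rfl
    intro c _
    split_ifs <;> ring

end EigAux

open Finset EigAux in
/-- Monotonicity in the dominance order: if `λ, μ ⊢ n` and `λ ⊵ μ` then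
`eig(T_λ^→) ≥ eig(T_μ^→)` and `eig(T_λ^↓) ≥ eig(T_μ^↓)`. -/
theorem eig_dominance (n : ℕ) (μ ν : YoungDiagram) (hμ : μ.card = n) (hν : ν.card = n)
    (hdom : Dominates μ ν) :
    eig ν (rowTab ν) ≤ eig μ (rowTab μ) ∧ eig ν (colTab ν) ≤ eig μ (colTab μ) := by
  by_cases hn0 : n = 0
  · have hμc : μ.cells = ∅ := Finset.card_eq_zero.mp (by rw [show μ.cells.card = μ.card from rfl, hμ, hn0])
    have hνc : ν.cells = ∅ := Finset.card_eq_zero.mp (by rw [show ν.cells.card = ν.card from rfl, hν, hn0])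
    constructor <;> simp [eig, hμc, hνc]
  have hdomPS : ∀ i, PS ν i ≤ PS μ i := hdom
  have hμPSn : PS μ n = n := by rw [PS_eq_card μ (hμ ▸ colLen0_le_card μ), hμ]
  have hνPSn : PS ν n = n := by rw [PS_eq_card ν (hν ▸ colLen0_le_card ν), hν]
  have hμPScn : PSc μ n = n := by rw [PSc_eq_card μ (hμ ▸ rowLen0_le_card μ), hμ]
  have hνPScn : PSc ν n = n := by rw [PSc_eq_card ν (hν ▸ rowLen0_le_card ν), hν]
  have hdomPSc : ∀ j, PSc μ j ≤ PSc ν j := by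
    intro j
    have h1 := PSc_add_gs μ n hμ j
    have h2 := PSc_add_gs ν n hν j
    have h3 := gs_mono (PS ν) (PS μ) (PS_mono ν) (PS_zero ν) (PS_concave ν)
      (PS_mono μ) (PS_zero μ) hdomPS n j
    omega
  have minmono : ∀ (κ : YoungDiagram) (t : ℕ), Monotone (fun i => min (PS κ i) t) :=
    fun κ t a b hab => min_le_min (PS_mono κ hab) (le_refl t)
  have minmono' : ∀ (κ : YoungDiagram) (t : ℕ), Monotone (fun j => min (PSc κ j) t) :=
    fun κ t a b hab => min_le_min (PSc_mono κ hab) (le_refl t)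
  have minconc : ∀ (κ : YoungDiagram) (t i : ℕ),
      min (PS κ (i + 2)) t + min (PS κ i) t ≤ 2 * min (PS κ (i + 1)) t := by
    intro κ t i
    have h1 := PS_concave κ i
    have h2 := PS_mono κ (show i ≤ i + 1 by omega)
    have h3 := PS_mono κ (show i + 1 ≤ i + 2 by omega)
    omega
  have minconc' : ∀ (κ : YoungDiagram) (t j : ℕ),
      min (PSc κ (j + 2)) t + min (PSc κ j) t ≤ 2 * min (PSc κ (j + 1)) t := by
    intro κ t j
    have h1 := PSc_concave κ j
    have h2 := PSc_mono κ (show j ≤ j + 1 by omega)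
    have h3 := PSc_mono κ (show j + 1 ≤ j + 2 by omega)
    omega
  have hrowcomp : ∀ t ≤ n, CvalR n (fun i => min (PS ν i) t)
      ≤ CvalR n (fun i => min (PS μ i) t) := by
    intro t ht
    apply masterRow n _ _ (minmono ν t) (by simp [PS_zero]) (minconc ν t)
      (minmono μ t) (by simp [PS_zero])
      (fun i => min_le_min (hdomPS i) (le_refl t))
    · rw [hνPSn, hμPSn]
    · rw [hμPSn]
      omega
  have hcolcomp : ∀ t ≤ n, CvalC n (fun j => min (PSc ν j) t)
      ≤ CvalC n (fun j => min (PSc μ j) t) := by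
    intro t ht
    apply masterCol n _ _ (minmono' μ t) (by simp [PSc_zero]) (minconc' μ t)
      (minmono' ν t) (by simp [PSc_zero])
      (fun j => min_le_min (hdomPSc j) (le_refl t))
    · rw [hμPScn, hνPScn]
    · rw [hνPScn]
      omega
  have hwt : ∀ t ∈ Ico 1 n, (0 : ℝ) ≤ 1 / (t : ℝ) - 1 / ((t : ℝ) + 1) := by
    intro t ht
    obtain ⟨h1t, -⟩ := mem_Ico.mp ht
    have h0 : (0 : ℝ) < t := by exact_mod_cast h1t
    rw [sub_nonneg]
    apply one_div_le_one_div_of_le h0 (by linarith)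
  constructor
  · unfold eig
    rw [hμ, hν, F_row μ n hμ, F_row ν n hν]
    apply mul_le_mul_of_nonneg_left _ (by positivity)
    apply add_le_add
    · exact mul_le_mul_of_nonneg_left (hrowcomp n (le_refl n)) (by positivity)
    · exact Finset.sum_le_sum fun t ht =>
        mul_le_mul_of_nonneg_left (hrowcomp t (by have := mem_Ico.mp ht; omega)) (hwt t ht)
  · unfold eig
    rw [hμ, hν, F_col μ n hμ, F_col ν n hν]
    apply mul_le_mul_of_nonneg_left _ (by positivity)
    apply add_le_add
    · exact mul_le_mul_of_nonneg_left (hcolcomp n (le_refl n)) (by positivity)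
    · exact Finset.sum_le_sum fun t ht =>
        mul_le_mul_of_nonneg_left (hcolcomp t (by have := mem_Ico.mp ht; omega)) (hwt t ht)
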